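/- Let c > 0 be a constant. For each integer n ≥ 2 with c·n·ln n > 1, set p_n = 1/(c·n·ln n), fix any q_n ∈ (0,1), and consider the MMAHH with acceptance operators OI and OW on OneMax over {0,1}^n with switching probabilities p = p_n and q = q_n, started from x_0 = (0,…,0) and s_0 = OI. Let P_n = Pr[y_{T_s^{(1)}} = 0] be the probability that the global optimum x* is reached by the end of the first phase. Then lim_{n→∞} P_n = e^{−1/c}. -/

import Mathlib

open MeasureTheory
open scoped ENNReal NNReal

namespace MMAHHStmt

/-- The two acceptance operators. -/
inductive Op : Type
  | OI : Op
  | OW : Op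
  deriving DecidableEq

instance : MeasurableSpace Op := ⊤

/-- Search points: bit-strings of length `n`. -/
abbrev Point (n : ℕ) := Fin n → Bool

/-- The number of one-bits of a bit-string. -/
def ones {n : ℕ} (x : Point n) : ℕ := (Finset.univ.filter fun i => x i = true).card

/-- The all-ones string, the global optimum of all benchmarks considered. -/
def optimum (n : ℕ) : Point n := fun _ => true

/-- Flipping the bit in position `v`. -/
def flipBit {n : ℕ} (x : Point n) (v : Fin n) : Point n := Function.update x v (!(x v))

open Classical in
/-- The search point obtained from `x` by proposing to flip bit `v` and applying the
acceptance operator `op` for the objective function `f`. -/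
noncomputable def movedPoint {n : ℕ} (f : Point n → ℝ) (op : Op) (x : Point n) (v : Fin n) :
    Point n :=
  match op with
  | Op.OI => if f x < f (flipBit x v) then flipBit x v else x
  | Op.OW => if f (flipBit x v) < f x then flipBit x v else x

open Classical in
/-- One-step transition probability of the search point under acceptance operator `op`:
a uniformly random bit is flipped and the move is accepted or rejected according to `op`. -/
noncomputable def moveProb {n : ℕ} (f : Point n → ℝ) (op : Op) (x x' : Point n) : ℝ≥0∞ :=
  ((Finset.univ.filter fun v => movedPoint f op x v = x').card : ℝ≥0∞) / n

/-- Transition probabilities of the two-state Markov chain on the acceptance operators. -/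
noncomputable def switchProb (p q : ℝ) : Op → Op → ℝ≥0∞
  | Op.OI, Op.OI => ENNReal.ofReal (1 - p)
  | Op.OI, Op.OW => ENNReal.ofReal p
  | Op.OW, Op.OI => ENNReal.ofReal q
  | Op.OW, Op.OW => ENNReal.ofReal (1 - q)

/-- One-step transition probabilities of the MMAHH on the state space
`Point n × Op`: the search point moves according to the current acceptance operator, and,
independently, the operator switches according to the two-state Markov chain. -/
noncomputable def mmahhTrans {n : ℕ} (f : Point n → ℝ) (p q : ℝ) :
    Point n × Op → Point n × Op → ℝ≥0∞ :=
  fun s s' => moveProb f s.2 s.1 s'.1 * switchProb p q s.2 s'.2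

/-- `X` is (a version of) the MMAHH Markov chain with objective function `f` and switching
probabilities `p` and `q`, under the measure `μ`: each `X t` is measurable, and conditionally
on any history, the next state is distributed according to `mmahhTrans`. -/
def IsMMAHH {n : ℕ} {Ω : Type*} [MeasurableSpace Ω] (μ : Measure Ω)
    (X : ℕ → Ω → Point n × Op) (f : Point n → ℝ) (p q : ℝ) : Prop :=
  (∀ t, Measurable (X t)) ∧
  ∀ (t : ℕ) (σ : ℕ → Point n × Op) (s' : Point n × Op),
    μ {ω | (∀ i ≤ t, X i ω = σ i) ∧ X (t + 1) ω = s'}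
      = μ {ω | ∀ i ≤ t, X i ω = σ i} * mmahhTrans f p q (σ t) s'

/-- The runtime: the first hitting time of the global optimum, as an extended natural number
(`⊤` if the optimum is never reached). -/
noncomputable def hitTime {n : ℕ} {Ω : Type*} (X : ℕ → Ω → Point n × Op) (ω : Ω) : ℕ∞ :=
  ⨅ t ∈ {t : ℕ | (X t ω).1 = optimum n}, (t : ℕ∞)

/-- The `k`-th switching time between the two acceptance operators (with junk value given by
`Nat.sInf ∅ = 0` on the probability-zero event that no further switch occurs). -/
noncomputable def switchTime {n : ℕ} {Ω : Type*} (X : ℕ → Ω → Point n × Op) : ℕ → Ω → ℕ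
  | 0, _ => 0
  | k + 1, ω =>
      sInf {t : ℕ | switchTime X k ω ≤ t ∧ (X t ω).2 ≠ (X (switchTime X k ω) ω).2}

/-- The OneMax benchmark. -/
noncomputable def OneMax (n : ℕ) (x : Point n) : ℝ := (ones x : ℝ)

section Comb

variable {n : ℕ}

lemma ones_le (x : Point n) : ones x ≤ n := by
  classical
  simpa [ones] using (Finset.card_filter_le Finset.univ (fun i => x i = true))

lemma ones_optimum : ones (optimum n) = n := by
  classical
  simp [ones, optimum]

lemma ones_eq_iff_optimum (x : Point n) : ones x = n ↔ x = optimum n := by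
  classical
  constructor
  · intro h
    have hfil : (Finset.univ.filter fun i => x i = true) = Finset.univ := by
      apply Finset.eq_univ_of_card
      simpa [ones] using h
    funext i
    have : i ∈ Finset.univ.filter fun i => x i = true := by
      rw [hfil]; exact Finset.mem_univ i
    simpa [optimum] using (Finset.mem_filter.mp this).2
  · rintro rfl; exact ones_optimum

lemma ones_allfalse : ones (fun _ : Fin n => false) = 0 := by
  classical
  simp [ones]

lemma flipBit_ne (x : Point n) (v : Fin n) : flipBit x v ≠ x := by
  intro h
  have := congrFun h v
  simp [flipBit] at this

lemma ones_flipBit_false (x : Point n) (v : Fin n) (hv : x v = false) :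
    ones (flipBit x v) = ones x + 1 := by
  classical
  have hfil : (Finset.univ.filter fun i => flipBit x v i = true)
      = insert v (Finset.univ.filter fun i => x i = true) := by
    ext i
    by_cases hiv : i = v
    · subst hiv
      simp [flipBit, hv]
    · rw [Finset.mem_insert, Finset.mem_filter, Finset.mem_filter, flipBit,
        Function.update_of_ne hiv]
      simp [hiv]
  have hvmem : v ∉ (Finset.univ.filter fun i => x i = true) := by simp [hv]
  simp [ones, hfil, Finset.card_insert_of_notMem hvmem]

lemma ones_flipBit_le (x : Fin n → Bool) (v : Fin n) (hv : x v = true) :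
    ones (flipBit x v) ≤ ones x := by
  classical
  apply Finset.card_le_card
  intro i hi
  simp only [Finset.mem_filter, Finset.mem_univ, true_and] at hi ⊢
  by_cases hiv : i = v
  · subst hiv; simp [flipBit, hv] at hi
  · simpa [flipBit, Function.update_of_ne hiv] using hi

lemma movedPoint_OI (x : Point n) (v : Fin n) :
    movedPoint (OneMax n) Op.OI x v = if x v = true then x else flipBit x v := by
  by_cases hv : x v = true
  · have : ¬ (OneMax n x < OneMax n (flipBit x v)) := by
      simp only [OneMax, not_lt, Nat.cast_le]
      exact ones_flipBit_le x v hv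
    simp [movedPoint, this, hv]
  · have hv' : x v = false := by simpa using hv
    have : OneMax n x < OneMax n (flipBit x v) := by
      simp only [OneMax, Nat.cast_lt]
      rw [ones_flipBit_false x v hv']
      omega
    simp [movedPoint, this, hv]

/-- Key reduction: sums over targets of moveProb become sums over flip positions. -/
lemma sum_moveProb_mul (f : Point n → ℝ) (op : Op) (x : Point n) (h : Point n → ℝ≥0∞) :
    ∑ x' : Point n, moveProb f op x x' * h x'
      = (∑ v : Fin n, h (movedPoint f op x v)) / n := by
  classical
  have : ∀ x' : Point n, moveProb f op x x' * h x'
      = (∑ v ∈ Finset.univ.filter (fun v => movedPoint f op x v = x'), h x') / n := by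
    intro x'
    rw [moveProb, Finset.sum_const, nsmul_eq_mul, ENNReal.div_eq_inv_mul, ENNReal.div_eq_inv_mul]
    ring
  rw [Finset.sum_congr rfl (fun x' _ => this x')]
  simp only [ENNReal.div_eq_inv_mul]
  rw [← Finset.mul_sum]
  congr 1
  rw [← Finset.sum_fiberwise_of_maps_to (g := fun v => movedPoint f op x v)
    (t := (Finset.univ : Finset (Point n))) (fun i _ => Finset.mem_univ _)
    (fun v => h (movedPoint f op x v))]
  apply Finset.sum_congr rfl
  intro x' _
  apply Finset.sum_congr rfl
  intro v hv
  rw [(Finset.mem_filter.mp hv).2]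

end Comb
section Gval

noncomputable def Gr (n : ℕ) (p : ℝ) : ℕ → ℝ
  | 0 => 1
  | 1 => 1 / ((n : ℝ) * p + (1 - p))
  | (k+2) => (((k : ℝ)+2)*(1-p))/((n:ℝ)*p + ((k:ℝ)+2)*(1-p)) * Gr n p (k+1)

noncomputable def Hr (n : ℕ) (p : ℝ) (k : ℕ) : ℝ :=
  if k = 0 then 1 else (1 - p) * Gr n p k

variable {n : ℕ} {p : ℝ}

lemma denom_pos (hn : 1 ≤ n) (hp : 0 < p) (hp1 : p < 1) (k : ℝ) (hk : 0 ≤ k) :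
    0 < (n:ℝ) * p + k * (1 - p) := by
  have hn' : (1:ℝ) ≤ n := by exact_mod_cast hn
  nlinarith

lemma Gr_nonneg (hn : 1 ≤ n) (hp : 0 < p) (hp1 : p < 1) : ∀ k, 0 ≤ Gr n p k := by
  intro k
  induction k with
  | zero => norm_num [Gr]
  | succ k ih =>
    match k, ih with
    | 0, _ =>
      have hd1 : 0 < (n:ℝ) * p + (1 - p) := by
        have := denom_pos hn hp hp1 1 (by norm_num); linarith
      rw [show Gr n p 1 = 1 / ((n : ℝ) * p + (1 - p)) from rfl]
      exact div_nonneg (by norm_num) hd1.le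
    | (j+1), ih =>
      rw [show Gr n p (j+2) = (((j : ℝ)+2)*(1-p))/((n:ℝ)*p + ((j:ℝ)+2)*(1-p)) * Gr n p (j+1)
        from rfl]
      have hd := denom_pos hn hp hp1 ((j:ℝ)+2) (by positivity)
      have hnum : 0 ≤ ((j : ℝ)+2)*(1-p) := by nlinarith
      exact mul_nonneg (div_nonneg hnum hd.le) ih

lemma Gr_le_one (hn : 1 ≤ n) (hp : 0 < p) (hp1 : p < 1) : ∀ k, Gr n p k ≤ 1 := by
  intro k
  induction k with
  | zero => norm_num [Gr]
  | succ k ih =>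
    match k, ih with
    | 0, _ =>
      have hd : 0 < (n:ℝ) * p + (1 - p) := by
        have := denom_pos hn hp hp1 1 (by norm_num); linarith
      rw [show Gr n p 1 = 1 / ((n : ℝ) * p + (1 - p)) from rfl]
      rw [div_le_one hd]
      have hn' : (1:ℝ) ≤ n := by exact_mod_cast hn
      nlinarith
    | (j+1), ih =>
      rw [show Gr n p (j+2) = (((j : ℝ)+2)*(1-p))/((n:ℝ)*p + ((j:ℝ)+2)*(1-p)) * Gr n p (j+1)
        from rfl]
      have hd := denom_pos hn hp hp1 ((j:ℝ)+2) (by positivity)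
      have hnum : 0 ≤ ((j : ℝ)+2)*(1-p) := by nlinarith
      have hfac : (((j : ℝ)+2)*(1-p))/((n:ℝ)*p + ((j:ℝ)+2)*(1-p)) ≤ 1 := by
        rw [div_le_one hd]
        nlinarith
      calc (((j : ℝ)+2)*(1-p))/((n:ℝ)*p + ((j:ℝ)+2)*(1-p)) * Gr n p (j+1)
      _ ≤ 1 * 1 := by
        apply mul_le_mul hfac ih (Gr_nonneg hn hp hp1 _) (by norm_num)
      _ = 1 := by norm_num

lemma Hr_nonneg (hn : 1 ≤ n) (hp : 0 < p) (hp1 : p < 1) (k : ℕ) : 0 ≤ Hr n p k := by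
  unfold Hr
  split
  · norm_num
  · exact mul_nonneg (by linarith) (Gr_nonneg hn hp hp1 _)

lemma Gr_harmonic (hn : 1 ≤ n) (hp : 0 < p) (hp1 : p < 1) (k : ℕ) (hk1 : 1 ≤ k) :
    (n:ℝ) * Gr n p k = ((n:ℝ) - (k:ℝ)) * Hr n p k + (k:ℝ) * Hr n p (k-1) := by
  match k, hk1 with
  | 1, _ =>
    have hd1 : 0 < (n:ℝ) * p + (1 - p) := by
      have := denom_pos hn hp hp1 1 (by norm_num); linarith
    have hd' : (n:ℝ) * p + (1 - p) ≠ 0 := ne_of_gt hd1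
    have h10 : (1:ℕ) - 1 = 0 := rfl
    simp only [Hr, h10, if_neg one_ne_zero, if_pos rfl]
    rw [show Gr n p 1 = 1 / ((n : ℝ) * p + (1 - p)) from rfl]
    push_cast
    field_simp
    ring
  | (j+2), _ =>
    have hd := denom_pos hn hp hp1 ((j:ℝ)+2) (by positivity)
    have hd' : (n:ℝ)*p + ((j:ℝ)+2)*(1-p) ≠ 0 := ne_of_gt hd
    have e1 : (j:ℕ)+2-1 = j+1 := rfl
    simp only [Hr, e1, if_neg (Nat.succ_ne_zero _)]
    rw [show Gr n p (j+2) = (((j : ℝ)+2)*(1-p))/((n:ℝ)*p + ((j:ℝ)+2)*(1-p)) * Gr n p (j+1)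
      from rfl]
    push_cast
    field_simp
    ring

end Gval
section Harm

noncomputable def gE (n : ℕ) (p : ℝ) (x : Point n) : ℝ≥0∞ :=
  ENNReal.ofReal (Gr n p (n - ones x))

variable {n : ℕ} {p : ℝ}

lemma gE_le_one (hn : 1 ≤ n) (hp : 0 < p) (hp1 : p < 1) (x : Point n) : gE n p x ≤ 1 :=
  ENNReal.ofReal_le_one.mpr (Gr_le_one hn hp hp1 _)

lemma sum_moveProb (hn : 1 ≤ n) (f : Point n → ℝ) (op : Op) (x : Point n) :
    ∑ x' : Point n, moveProb f op x x' = 1 := by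
  have h := sum_moveProb_mul f op x (fun _ => 1)
  simp only [mul_one] at h
  rw [h]
  simp only [Finset.sum_const, Finset.card_univ, Fintype.card_fin, nsmul_eq_mul, mul_one]
  exact ENNReal.div_self (by exact_mod_cast Nat.cast_ne_zero.mpr (by omega : n ≠ 0))
    (ENNReal.natCast_ne_top n)

lemma optimum_iff_sub_zero (hn : 1 ≤ n) (x : Point n) :
    x = optimum n ↔ n - ones x = 0 := by
  rw [← ones_eq_iff_optimum]
  have := ones_le x
  omega

lemma gE_harmonic (hn : 1 ≤ n) (hp : 0 < p) (hp1 : p < 1) (q : ℝ) (x : Point n) :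
    gE n p x = mmahhTrans (OneMax n) p q (x, Op.OI) (optimum n, Op.OW)
      + ∑ x' : Point n, mmahhTrans (OneMax n) p q (x, Op.OI) (x', Op.OI) * gE n p x' := by
  classical
  have hp0 : (0:ℝ) ≤ p := hp.le
  have h1p : (0:ℝ) ≤ 1 - p := by linarith
  have hnR : (0:ℝ) < n := by
    have : (1:ℝ) ≤ n := by exact_mod_cast hn
    linarith
  simp only [mmahhTrans, switchProb]
  -- first term as a sum
  have hsing : mmahhTrans (OneMax n) p q (x, Op.OI) (optimum n, Op.OW)
      = ∑ x' : Point n, moveProb (OneMax n) Op.OI x x'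
          * (if x' = optimum n then ENNReal.ofReal p else 0) := by
    rw [Finset.sum_eq_single (optimum n)]
    · simp [mmahhTrans, switchProb]
    · intro b _ hb; simp [hb]
    · intro hb; exact absurd (Finset.mem_univ _) hb
  rw [show (moveProb (OneMax n) Op.OI x (optimum n) * ENNReal.ofReal p : ℝ≥0∞)
      = mmahhTrans (OneMax n) p q (x, Op.OI) (optimum n, Op.OW) from rfl, hsing]
  simp only [mul_assoc]
  rw [← Finset.sum_add_distrib]
  simp only [← mul_add]
  -- pointwise identity to Hr
  have hpt : ∀ x' : Point n,
      (if x' = optimum n then ENNReal.ofReal p else 0) + ENNReal.ofReal (1-p) * gE n p x'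
        = ENNReal.ofReal (Hr n p (n - ones x')) := by
    intro x'
    by_cases hx' : x' = optimum n
    · have h0 : n - ones x' = 0 := (optimum_iff_sub_zero hn x').mp hx'
      rw [if_pos hx', h0]
      simp only [gE, h0]
      rw [show Gr n p 0 = 1 from rfl, show Hr n p 0 = 1 from rfl,
        ENNReal.ofReal_one, mul_one, ← ENNReal.ofReal_add hp0 h1p,
        show p + (1-p) = 1 by ring, ENNReal.ofReal_one]
    · have h0 : n - ones x' ≠ 0 := fun hc => hx' ((optimum_iff_sub_zero hn x').mpr hc)
      rw [if_neg hx', zero_add]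
      simp only [gE]
      rw [← ENNReal.ofReal_mul h1p]
      rw [show Hr n p (n - ones x') = (1-p) * Gr n p (n - ones x') from if_neg h0]
  rw [Finset.sum_congr rfl (fun x' _ => by rw [hpt x'])]
  rw [sum_moveProb_mul]
  -- evaluate the sum over flip positions
  set k := n - ones x with hk
  have hmove : ∀ v : Fin n,
      ENNReal.ofReal (Hr n p (n - ones (movedPoint (OneMax n) Op.OI x v)))
        = if x v = true then ENNReal.ofReal (Hr n p k) else ENNReal.ofReal (Hr n p (k-1)) := by
    intro v
    rw [movedPoint_OI]
    by_cases hv : x v = true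
    · rw [if_pos hv, if_pos hv]
    · have hv' : x v = false := by simpa using hv
      rw [if_neg hv, if_neg hv, ones_flipBit_false x v hv',
        show n - (ones x + 1) = k - 1 by omega]
  rw [Finset.sum_congr rfl (fun v _ => hmove v), Finset.sum_ite, Finset.sum_const,
    Finset.sum_const]
  have hcardT : (Finset.univ.filter (fun v => x v = true)).card = ones x := rfl
  have hcardF : (Finset.univ.filter (fun v => ¬ x v = true)).card = n - ones x := by
    have := Finset.card_filter_add_card_filter_not
      (s := (Finset.univ : Finset (Fin n))) (p := fun v => x v = true)
    rw [Finset.card_univ, Fintype.card_fin] at this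
    omega
  rw [hcardT, hcardF]
  -- convert to a single ofReal
  have honesle := ones_le x
  rw [nsmul_eq_mul, nsmul_eq_mul, ← ENNReal.ofReal_natCast (ones x),
    ← ENNReal.ofReal_natCast (n - ones x),
    ← ENNReal.ofReal_mul (by positivity), ← ENNReal.ofReal_mul (by positivity),
    ← ENNReal.ofReal_add (mul_nonneg (by positivity) (Hr_nonneg hn hp hp1 _))
      (mul_nonneg (by positivity) (Hr_nonneg hn hp hp1 _)),
    ← ENNReal.ofReal_natCast n, ← ENNReal.ofReal_div_of_pos hnR]
  unfold gE
  rw [← hk]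
  congr 1
  -- the real identity
  rcases Nat.eq_or_lt_of_le honesle with heq | hlt
  · -- ones x = n, k = 0
    have hk0 : k = 0 := by omega
    rw [hk0, heq, show (0:ℕ)-1 = 0 from rfl, show Hr n p 0 = 1 from rfl,
      show Gr n p 0 = 1 from rfl]
    push_cast
    field_simp
    ring
  · have hk1 : 1 ≤ k := by omega
    have hid := Gr_harmonic hn hp hp1 k hk1
    have hkc : (k:ℝ) = (n:ℝ) - (ones x : ℝ) := by
      rw [hk, Nat.cast_sub honesle]
    have hcast1 : ((ones x : ℕ) : ℝ) = (n:ℝ) - (k:ℝ) := by linarith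
    rw [hcast1, eq_div_iff (ne_of_gt hnR)]
    linarith [hid]
end Harm
section Meas

instance : MeasurableSingletonClass Op := ⟨fun _ => trivial⟩

instance : Fintype Op := ⟨{Op.OI, Op.OW}, by intro x; cases x <;> simp⟩

example (n : ℕ) : MeasurableSingletonClass (Point n × Op) := by infer_instance

variable {n : ℕ} {Ω : Type*} [MeasurableSpace Ω]

/-- The initial state. -/
def initS (n : ℕ) : Point n × Op := (fun _ => false, Op.OI)

/-- Cylinder event. -/
def Cyl (X : ℕ → Ω → Point n × Op) (t : ℕ) (τ : Fin (t+1) → Point n × Op) : Set Ω :=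
  {ω | ∀ i : Fin (t+1), X i ω = τ i}

/-- Still-in-OI-phase event, at position `x` at time `t`. -/
def Dset (X : ℕ → Ω → Point n × Op) (t : ℕ) (x : Point n) : Set Ω :=
  {ω | X 0 ω = initS n ∧ (∀ i ≤ t, (X i ω).2 = Op.OI) ∧ (X t ω).1 = x}

/-- Success-at-time-`t` event. -/
def Bset (X : ℕ → Ω → Point n × Op) (t : ℕ) : Set Ω :=
  {ω | X 0 ω = initS n ∧ (∀ i < t, (X i ω).2 = Op.OI) ∧ X t ω = (optimum n, Op.OW)}

open Classical in
/-- Admissible trajectories for `Dset`. -/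
noncomputable def Tset (n : ℕ) (t : ℕ) (x : Point n) : Finset (Fin (t+1) → Point n × Op) :=
  Finset.univ.filter (fun τ => τ 0 = initS n ∧ (∀ i, (τ i).2 = Op.OI) ∧ (τ (Fin.last t)).1 = x)

lemma meas_Cyl (X : ℕ → Ω → Point n × Op) (hX : ∀ t, Measurable (X t)) (t : ℕ)
    (τ : Fin (t+1) → Point n × Op) : MeasurableSet (Cyl X t τ) := by
  have : Cyl X t τ = ⋂ i : Fin (t+1), (X i)⁻¹' {τ i} := by
    ext ω; simp [Cyl, Set.mem_iInter, Set.mem_preimage]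
  rw [this]
  exact MeasurableSet.iInter fun i => (hX i) (measurableSet_singleton _)

lemma meas_Dset (X : ℕ → Ω → Point n × Op) (hX : ∀ t, Measurable (X t)) (t : ℕ)
    (x : Point n) : MeasurableSet (Dset X t x) := by
  have : Dset X t x = (X 0)⁻¹' {initS n}
      ∩ (⋂ i, ⋂ (_ : i ≤ t), (X i)⁻¹' (Prod.snd ⁻¹' {Op.OI}))
      ∩ (X t)⁻¹' (Prod.fst ⁻¹' {x}) := by
    ext ω; simp [Dset, Set.mem_iInter, Set.mem_preimage]; try tauto
  rw [this]
  refine ((((hX 0) (measurableSet_singleton _)).inter (MeasurableSet.iInter fun i =>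
    MeasurableSet.iInter fun _ => (hX i) (measurable_snd (measurableSet_singleton _)))).inter
    ((hX t) (measurable_fst (measurableSet_singleton _))))

lemma meas_Bset (X : ℕ → Ω → Point n × Op) (hX : ∀ t, Measurable (X t)) (t : ℕ) :
    MeasurableSet (Bset X t) := by
  have : Bset X t = (X 0)⁻¹' {initS n}
      ∩ (⋂ i, ⋂ (_ : i < t), (X i)⁻¹' (Prod.snd ⁻¹' {Op.OI}))
      ∩ (X t)⁻¹' {(optimum n, Op.OW)} := by
    ext ω; simp [Bset, Set.mem_iInter, Set.mem_preimage]; try tauto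
  rw [this]
  refine ((((hX 0) (measurableSet_singleton _)).inter (MeasurableSet.iInter fun i =>
    MeasurableSet.iInter fun _ => (hX i) (measurable_snd (measurableSet_singleton _)))).inter
    ((hX t) (measurableSet_singleton _)))

lemma Dset_eq_biUnion (X : ℕ → Ω → Point n × Op) (t : ℕ) (x : Point n) :
    Dset X t x = ⋃ τ ∈ Tset n t x, Cyl X t τ := by
  classical
  ext ω
  simp only [Set.mem_iUnion, Tset, Finset.mem_filter, Finset.mem_univ, true_and]
  constructor
  · rintro ⟨h0, hOI, hx⟩
    refine ⟨fun i => X i ω, ⟨?_, ?_, ?_⟩, fun i => rfl⟩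
    · exact h0
    · intro i; exact hOI i (Fin.is_le i)
    · exact hx
  · rintro ⟨τ, ⟨h0, hOI, hx⟩, hcyl⟩
    refine ⟨?_, ?_, ?_⟩
    · have h := hcyl 0
      simp only [Fin.val_zero] at h
      rw [h]; exact h0
    · intro i hi
      have := hcyl ⟨i, Nat.lt_succ_of_le hi⟩
      rw [this]; exact hOI _
    · have := hcyl (Fin.last t)
      simp only [Fin.val_last] at this
      rw [this]; exact hx

omit [MeasurableSpace Ω] in
lemma Cyl_disjoint (X : ℕ → Ω → Point n × Op) (t : ℕ) :
    ∀ τ ∈ Tset n t x₀, ∀ τ' ∈ Tset n t x₀, τ ≠ τ' →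
      Disjoint (Cyl X t τ) (Cyl X t τ') := by
  intro τ _ τ' _ hne
  rw [Set.disjoint_left]
  intro ω h1 h2
  exact hne (funext fun i => (h1 i).symm.trans (h2 i))

end Meas
section Meas2

variable {n : ℕ} {Ω : Type*} [MeasurableSpace Ω] {κ : Point n × Op → Point n × Op → ℝ≥0∞}
  (μ : Measure Ω) (X : ℕ → Ω → Point n × Op)

lemma cyl_step
    (hstep : ∀ (t : ℕ) (σ : ℕ → Point n × Op) (s' : Point n × Op),
      μ {ω | (∀ i ≤ t, X i ω = σ i) ∧ X (t + 1) ω = s'}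
        = μ {ω | ∀ i ≤ t, X i ω = σ i} * κ (σ t) s')
    (t : ℕ) (τ : Fin (t+1) → Point n × Op) (s' : Point n × Op) :
    μ (Cyl X t τ ∩ (X (t+1))⁻¹' {s'}) = μ (Cyl X t τ) * κ (τ (Fin.last t)) s' := by
  set σ : ℕ → Point n × Op := fun i => if h : i < t+1 then τ ⟨i, h⟩ else (optimum n, Op.OI)
    with hσ
  have hA : {ω | ∀ i ≤ t, X i ω = σ i} = Cyl X t τ := by
    ext ω
    constructor
    · intro h i
      have hh := h i (Fin.is_le i)
      rw [hh, hσ]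
      simp only [i.isLt, dif_pos, Fin.eta]
    · intro h i hi
      have hh := h ⟨i, Nat.lt_succ_of_le hi⟩
      simp only at hh
      rw [hh, hσ]
      simp only [Nat.lt_succ_of_le hi, dif_pos]
  have hB : {ω | (∀ i ≤ t, X i ω = σ i) ∧ X (t+1) ω = s'}
      = Cyl X t τ ∩ (X (t+1))⁻¹' {s'} := by
    rw [← hA]
    ext ω
    simp [Set.mem_inter_iff, Set.mem_preimage]
  have hσt : σ t = τ (Fin.last t) := by
    rw [hσ]
    simp only [Nat.lt_succ_self, dif_pos]
    rfl
  have h := hstep t σ s'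
  rw [hA, hB, hσt] at h
  exact h

lemma Dset_step
    (hX : ∀ t, Measurable (X t))
    (hstep : ∀ (t : ℕ) (σ : ℕ → Point n × Op) (s' : Point n × Op),
      μ {ω | (∀ i ≤ t, X i ω = σ i) ∧ X (t + 1) ω = s'}
        = μ {ω | ∀ i ≤ t, X i ω = σ i} * κ (σ t) s')
    (t : ℕ) (x : Point n) (s' : Point n × Op) :
    μ (Dset X t x ∩ (X (t+1))⁻¹' {s'}) = μ (Dset X t x) * κ (x, Op.OI) s' := by
  classical
  have hpre : MeasurableSet ((X (t+1))⁻¹' {s'}) := (hX (t+1)) (measurableSet_singleton _)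
  rw [Dset_eq_biUnion, Set.iUnion₂_inter]
  rw [measure_biUnion_finset ?disj1 ?meas1]
  rw [measure_biUnion_finset ?disj2 ?meas2]
  case disj1 =>
    intro τ hτ τ' hτ' hne
    exact Set.disjoint_of_subset Set.inter_subset_left Set.inter_subset_left
      (Cyl_disjoint X t τ hτ τ' hτ' hne)
  case meas1 => exact fun τ _ => (meas_Cyl X hX t τ).inter hpre
  case disj2 => exact fun τ hτ τ' hτ' hne => Cyl_disjoint X t τ hτ τ' hτ' hne
  case meas2 => exact fun τ _ => meas_Cyl X hX t τ
  rw [Finset.sum_mul]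
  apply Finset.sum_congr rfl
  intro τ hτ
  rw [cyl_step μ X hstep t τ s']
  congr 2
  simp only [Tset, Finset.mem_filter] at hτ
  obtain ⟨-, -, hOI, hx⟩ := hτ
  exact Prod.ext hx (hOI (Fin.last t))

omit [MeasurableSpace Ω] in
lemma Dset_succ_set (t : ℕ) (x' : Point n) :
    Dset X (t+1) x' = ⋃ x : Point n, (Dset X t x ∩ (X (t+1))⁻¹' {(x', Op.OI)}) := by
  ext ω
  simp only [Dset, Set.mem_iUnion, Set.mem_inter_iff, Set.mem_preimage, Set.mem_setOf_eq,
    Set.mem_singleton_iff]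
  constructor
  · rintro ⟨h0, hOI, hx⟩
    refine ⟨(X t ω).1, ⟨h0, fun i hi => hOI i (le_trans hi (Nat.le_succ t)), rfl⟩, ?_⟩
    have h1 : (X (t+1) ω).1 = x' := hx
    have h2 : (X (t+1) ω).2 = Op.OI := hOI (t+1) le_rfl
    exact Prod.ext h1 h2
  · rintro ⟨x, ⟨h0, hOI, hx⟩, hs⟩
    refine ⟨h0, ?_, by rw [hs]⟩
    intro i hi
    by_cases h : i ≤ t
    · exact hOI i h
    · have : i = t + 1 := by omega
      subst this; rw [hs]

omit [MeasurableSpace Ω] in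
lemma Bset_succ_set (t : ℕ) :
    Bset X (t+1) = ⋃ x : Point n, (Dset X t x ∩ (X (t+1))⁻¹' {(optimum n, Op.OW)}) := by
  ext ω
  simp only [Bset, Dset, Set.mem_iUnion, Set.mem_inter_iff, Set.mem_preimage, Set.mem_setOf_eq,
    Set.mem_singleton_iff]
  constructor
  · rintro ⟨h0, hOI, hx⟩
    exact ⟨(X t ω).1, ⟨h0, fun i hi => hOI i (Nat.lt_succ_of_le hi), rfl⟩, hx⟩
  · rintro ⟨x, ⟨h0, hOI, hx⟩, hs⟩
    exact ⟨h0, fun i hi => hOI i (Nat.lt_succ_iff.mp hi), hs⟩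

omit [MeasurableSpace Ω] in
lemma Dset_disjoint (t : ℕ) :
    ∀ x x' : Point n, x ≠ x' → Disjoint (Dset X t x) (Dset X t x') := by
  intro x x' hne
  rw [Set.disjoint_left]
  rintro ω ⟨-, -, h1⟩ ⟨-, -, h2⟩
  exact hne (h1 ▸ h2 ▸ rfl)

end Meas2
section Meas3

variable {n : ℕ} {Ω : Type*} [MeasurableSpace Ω] {κ : Point n × Op → Point n × Op → ℝ≥0∞}
  (μ : Measure Ω) (X : ℕ → Ω → Point n × Op)

lemma measure_Dset_succ
    (hX : ∀ t, Measurable (X t))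
    (hstep : ∀ (t : ℕ) (σ : ℕ → Point n × Op) (s' : Point n × Op),
      μ {ω | (∀ i ≤ t, X i ω = σ i) ∧ X (t + 1) ω = s'}
        = μ {ω | ∀ i ≤ t, X i ω = σ i} * κ (σ t) s')
    (t : ℕ) (x' : Point n) :
    μ (Dset X (t+1) x') = ∑ x : Point n, μ (Dset X t x) * κ (x, Op.OI) (x', Op.OI) := by
  classical
  rw [Dset_succ_set, show (⋃ x : Point n, (Dset X t x ∩ (X (t+1))⁻¹' {(x', Op.OI)}))
    = ⋃ x ∈ (Finset.univ : Finset (Point n)), (Dset X t x ∩ (X (t+1))⁻¹' {(x', Op.OI)}) by simp]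
  rw [measure_biUnion_finset ?disj ?meas]
  case disj =>
    intro a _ b _ hne
    exact Set.disjoint_of_subset Set.inter_subset_left Set.inter_subset_left
      (Dset_disjoint X t a b hne)
  case meas =>
    exact fun a _ => (meas_Dset X hX t a).inter ((hX (t+1)) (measurableSet_singleton _))
  exact Finset.sum_congr rfl fun x _ => Dset_step μ X hX hstep t x _

lemma measure_Bset_succ
    (hX : ∀ t, Measurable (X t))
    (hstep : ∀ (t : ℕ) (σ : ℕ → Point n × Op) (s' : Point n × Op),
      μ {ω | (∀ i ≤ t, X i ω = σ i) ∧ X (t + 1) ω = s'}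
        = μ {ω | ∀ i ≤ t, X i ω = σ i} * κ (σ t) s')
    (t : ℕ) :
    μ (Bset X (t+1)) = ∑ x : Point n, μ (Dset X t x) * κ (x, Op.OI) (optimum n, Op.OW) := by
  classical
  rw [Bset_succ_set, show (⋃ x : Point n, (Dset X t x ∩ (X (t+1))⁻¹' {(optimum n, Op.OW)}))
    = ⋃ x ∈ (Finset.univ : Finset (Point n)),
        (Dset X t x ∩ (X (t+1))⁻¹' {(optimum n, Op.OW)}) by simp]
  rw [measure_biUnion_finset ?disj ?meas]
  case disj =>
    intro a _ b _ hne
    exact Set.disjoint_of_subset Set.inter_subset_left Set.inter_subset_left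
      (Dset_disjoint X t a b hne)
  case meas =>
    exact fun a _ => (meas_Dset X hX t a).inter ((hX (t+1)) (measurableSet_singleton _))
  exact Finset.sum_congr rfl fun x _ => Dset_step μ X hX hstep t x _

lemma measure_Dset_zero
    (hinit : μ {ω | X 0 ω = initS n} = 1) (x : Point n) :
    μ (Dset X 0 x) = if x = (fun _ => false) then 1 else 0 := by
  classical
  by_cases hx : x = (fun _ => false)
  · subst hx
    rw [if_pos rfl, ← hinit]
    congr 1
    ext ω
    simp only [Dset, Set.mem_setOf_eq]
    constructor
    · rintro ⟨h0, -, -⟩; exact h0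
    · intro h0
      refine ⟨h0, ?_, ?_⟩
      · intro i hi
        have : i = 0 := Nat.le_zero.mp hi
        subst this
        rw [h0]; rfl
      · rw [h0]; rfl
  · rw [if_neg hx]
    have he : Dset X 0 x = (∅ : Set Ω) := by
      ext ω
      simp only [Dset, Set.mem_setOf_eq, Set.mem_empty_iff_false, iff_false]
      rintro ⟨h0, -, hx'⟩
      apply hx
      rw [← hx', h0]
      rfl
    rw [he, measure_empty]

end Meas3
section Meas4

variable {n : ℕ} {Ω : Type*} [MeasurableSpace Ω] {p q : ℝ}
  (μ : Measure Ω) (X : ℕ → Ω → Point n × Op)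

lemma trans_OIOI (x x' : Point n) :
    mmahhTrans (OneMax n) p q (x, Op.OI) (x', Op.OI)
      = moveProb (OneMax n) Op.OI x x' * ENNReal.ofReal (1 - p) := rfl

lemma Dtotal (hn : 1 ≤ n) (hprob : IsProbabilityMeasure μ)
    (hX : ∀ t, Measurable (X t))
    (hstep : ∀ (t : ℕ) (σ : ℕ → Point n × Op) (s' : Point n × Op),
      μ {ω | (∀ i ≤ t, X i ω = σ i) ∧ X (t + 1) ω = s'}
        = μ {ω | ∀ i ≤ t, X i ω = σ i} * mmahhTrans (OneMax n) p q (σ t) s')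
    (hinit : μ {ω | X 0 ω = initS n} = 1) :
    ∀ t, ∑ x : Point n, μ (Dset X t x) ≤ ENNReal.ofReal (1 - p) ^ t := by
  intro t
  induction t with
  | zero =>
    classical
    rw [Finset.sum_congr rfl (fun x _ => measure_Dset_zero μ X hinit x)]
    have hone : (∑ x : Point n, if x = (fun _ => false) then (1:ℝ≥0∞) else 0) = 1 := by
      simp
    rw [hone, pow_zero]
  | succ t ih =>
    rw [Finset.sum_congr rfl (fun x' (_ : x' ∈ Finset.univ) =>
      measure_Dset_succ μ X hX hstep t x')]
    rw [Finset.sum_comm]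
    calc ∑ x : Point n, ∑ x' : Point n, μ (Dset X t x)
          * mmahhTrans (OneMax n) p q (x, Op.OI) (x', Op.OI)
        = ∑ x : Point n, μ (Dset X t x) * ENNReal.ofReal (1 - p) := by
          apply Finset.sum_congr rfl
          intro x _
          rw [← Finset.mul_sum]
          congr 1
          simp only [trans_OIOI]
          rw [← Finset.sum_mul, sum_moveProb hn, one_mul]
      _ = (∑ x : Point n, μ (Dset X t x)) * ENNReal.ofReal (1 - p) := by
          rw [Finset.sum_mul]
      _ ≤ ENNReal.ofReal (1 - p) ^ t * ENNReal.ofReal (1 - p) :=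
          mul_le_mul_left ih _
      _ = ENNReal.ofReal (1 - p) ^ (t+1) := by ring

lemma Minvariant (hn : 1 ≤ n) (hp : 0 < p) (hp1 : p < 1)
    (hX : ∀ t, Measurable (X t))
    (hstep : ∀ (t : ℕ) (σ : ℕ → Point n × Op) (s' : Point n × Op),
      μ {ω | (∀ i ≤ t, X i ω = σ i) ∧ X (t + 1) ω = s'}
        = μ {ω | ∀ i ≤ t, X i ω = σ i} * mmahhTrans (OneMax n) p q (σ t) s') (t : ℕ) :
    (∑ m ∈ Finset.range (t+1), μ (Bset X (m+1)))
        + ∑ x : Point n, μ (Dset X (t+1) x) * gE n p x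
      = (∑ m ∈ Finset.range t, μ (Bset X (m+1)))
        + ∑ x : Point n, μ (Dset X t x) * gE n p x := by
  rw [Finset.sum_range_succ, add_assoc]
  congr 1
  rw [measure_Bset_succ μ X hX hstep t]
  rw [show (∑ x' : Point n, μ (Dset X (t+1) x') * gE n p x')
      = ∑ x' : Point n, ∑ x : Point n,
          μ (Dset X t x) * mmahhTrans (OneMax n) p q (x, Op.OI) (x', Op.OI) * gE n p x' from
    Finset.sum_congr rfl fun x' _ => by
      rw [measure_Dset_succ μ X hX hstep t x', Finset.sum_mul]]
  rw [Finset.sum_comm, ← Finset.sum_add_distrib]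
  apply Finset.sum_congr rfl
  intro x _
  simp only [mul_assoc, ← Finset.mul_sum, ← mul_add]
  rw [← gE_harmonic hn hp hp1 q x]

lemma measure_success (hn : 2 ≤ n) (hp : 0 < p) (hp1 : p < 1)
    (hprob : IsProbabilityMeasure μ)
    (hM : IsMMAHH μ X (OneMax n) p q)
    (hinit : μ {ω | X 0 ω = initS n} = 1) :
    μ {ω | n - ones ((X (switchTime X 1 ω) ω).1) = 0} = ENNReal.ofReal (Gr n p n) := by
  classical
  obtain ⟨hX, hstep⟩ := hM
  have hn1 : 1 ≤ n := by omega
  set E := {ω | n - ones ((X (switchTime X 1 ω) ω).1) = 0} with hE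
  -- switch-time identification
  have hswitch : ∀ ω, switchTime X 1 ω
      = sInf {u : ℕ | (X u ω).2 ≠ (X 0 ω).2} := by
    intro ω
    show sInf {u : ℕ | switchTime X 0 ω ≤ u ∧ (X u ω).2 ≠ (X (switchTime X 0 ω) ω).2} = _
    have h0 : switchTime X 0 ω = 0 := rfl
    rw [h0]
    congr 1
    ext u
    simp [Nat.zero_le]
  have hBsubE : ∀ t, Bset X (t+1) ⊆ E := by
    intro t ω hω
    obtain ⟨h0, hOI, hx⟩ := hω
    have hs0 : (X 0 ω).2 = Op.OI := by rw [h0]; rfl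
    have hmem : (t+1) ∈ {u : ℕ | (X u ω).2 ≠ (X 0 ω).2} := by
      simp only [Set.mem_setOf_eq, hs0, hx]
      decide
    have hsle : sInf {u : ℕ | (X u ω).2 ≠ (X 0 ω).2} ≤ t+1 := Nat.sInf_le hmem
    have hsmem := Nat.sInf_mem (⟨t+1, hmem⟩ :
      Set.Nonempty {u : ℕ | (X u ω).2 ≠ (X 0 ω).2})
    have hst : sInf {u : ℕ | (X u ω).2 ≠ (X 0 ω).2} = t + 1 := by
      by_contra hne
      have hlt : sInf {u : ℕ | (X u ω).2 ≠ (X 0 ω).2} < t + 1 := by omega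
      exact hsmem (by rw [hOI _ hlt, hs0])
    show n - ones ((X (switchTime X 1 ω) ω).1) = 0
    rw [hswitch ω, hst, hx]
    simp [ones_optimum]
  have hEsub : E ∩ {ω | X 0 ω = initS n} ⊆ ⋃ t : ℕ, Bset X (t+1) := by
    rintro ω ⟨hωE, h0⟩
    have hs0 : (X 0 ω).2 = Op.OI := by rw [h0]; rfl
    by_cases hne : Set.Nonempty {u : ℕ | (X u ω).2 ≠ (X 0 ω).2}
    · have hsmem := Nat.sInf_mem hne
      set τ := sInf {u : ℕ | (X u ω).2 ≠ (X 0 ω).2} with hτ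
      have hτpos : τ ≠ 0 := by
        intro hc
        rw [hc] at hsmem
        exact hsmem rfl
      obtain ⟨m, hm⟩ : ∃ m, τ = m + 1 := ⟨τ - 1, by omega⟩
      have hopt : (X τ ω).1 = optimum n := by
        have hE' : n - ones ((X τ ω).1) = 0 := by
          have := hωE
          simp only [hE, Set.mem_setOf_eq, hswitch ω, ← hτ] at this
          exact this
        have := ones_le ((X τ ω).1)
        exact (ones_eq_iff_optimum _).mp (by omega)
      have hop : (X τ ω).2 = Op.OW := by
        have : (X τ ω).2 ≠ Op.OI := by rw [← hs0] at *; exact hsmem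
        cases hx : (X τ ω).2
        · exact absurd hx this
        · rfl
      refine Set.mem_iUnion.mpr ⟨m, h0, ?_, ?_⟩
      · intro i hi
        have hilt : i < τ := by omega
        have : i ∉ {u : ℕ | (X u ω).2 ≠ (X 0 ω).2} := Nat.notMem_of_lt_sInf hilt
        simp only [Set.mem_setOf_eq, not_not] at this
        rw [this, hs0]
      · rw [← hm]
        exact Prod.ext hopt hop
    · have hτ0 : switchTime X 1 ω = 0 := by
        rw [hswitch ω, Set.not_nonempty_iff_eq_empty.mp hne, Nat.sInf_empty]
      have : n - ones ((X 0 ω).1) = 0 := by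
        have := hωE
        simp only [hE, Set.mem_setOf_eq, hτ0] at this
        exact this
      rw [h0] at this
      rw [show ((initS n : Point n × Op)).1 = (fun _ => false) from rfl] at this
      rw [ones_allfalse] at this
      omega
  -- B sets are pairwise disjoint and measurable
  have hB2 : ∀ t t' : ℕ, t < t' → Disjoint (Bset X (t+1)) (Bset X (t'+1)) := by
    intro t t' hlt
    rw [Set.disjoint_left]
    rintro ω ⟨-, -, hx⟩ ⟨-, hOI', -⟩
    have h1 : (X (t+1) ω).2 = Op.OI := hOI' (t+1) (by omega)
    rw [hx] at h1
    exact Op.noConfusion h1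
  have hBdisj : Pairwise (Function.onFun Disjoint fun t : ℕ => Bset X (t+1)) := by
    intro t t' hne
    rcases lt_or_gt_of_ne hne with h | h
    · exact hB2 t t' h
    · exact (hB2 t' t h).symm
  have hBmeas : ∀ t : ℕ, MeasurableSet (Bset X (t+1)) := fun t => meas_Bset X hX (t+1)
  have hUnion : μ (⋃ t : ℕ, Bset X (t+1)) = ∑' t : ℕ, μ (Bset X (t+1)) :=
    measure_iUnion hBdisj hBmeas
  -- μ E equals the union measure
  have hSmeas : MeasurableSet {ω | X 0 ω = initS n} := (hX 0) (measurableSet_singleton _)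
  have hScompl : μ {ω | X 0 ω = initS n}ᶜ = 0 := by
    rw [measure_compl hSmeas (measure_ne_top μ _), hinit, measure_univ, tsub_self]
  have hEeq : μ E = ∑' t : ℕ, μ (Bset X (t+1)) := by
    rw [← hUnion]
    apply le_antisymm
    · calc μ E ≤ μ ((⋃ t : ℕ, Bset X (t+1)) ∪ {ω | X 0 ω = initS n}ᶜ) := by
            apply measure_mono
            intro ω hω
            by_cases hω0 : X 0 ω = initS n
            · exact Or.inl (hEsub ⟨hω, hω0⟩)
            · exact Or.inr hω0
        _ ≤ μ (⋃ t : ℕ, Bset X (t+1)) + μ {ω | X 0 ω = initS n}ᶜ := measure_union_le _ _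
        _ = μ (⋃ t : ℕ, Bset X (t+1)) := by rw [hScompl, add_zero]
    · exact measure_mono (Set.iUnion_subset hBsubE)
  rw [hEeq]
  -- the invariant gives the value of the partial sums
  have hM0 : ∀ t, (∑ m ∈ Finset.range t, μ (Bset X (m+1)))
      + ∑ x : Point n, μ (Dset X t x) * gE n p x = ENNReal.ofReal (Gr n p n) := by
    intro t
    induction t with
    | zero =>
      rw [Finset.sum_range_zero, zero_add]
      rw [Finset.sum_congr rfl (fun x (_ : x ∈ Finset.univ) => by
        rw [measure_Dset_zero μ X hinit x])]
      rw [Finset.sum_eq_single (fun _ => false)]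
      · rw [if_pos rfl, one_mul]
        simp [gE, ones_allfalse]
      · intro b _ hb
        rw [if_neg hb, zero_mul]
      · intro hb
        exact absurd (Finset.mem_univ _) hb
    | succ t ih =>
      rw [Minvariant μ X hn1 hp hp1 hX hstep t, ih]
  -- remainder bound
  have h1p0 : (0:ℝ) ≤ 1 - p := by linarith
  have hR : ∀ t, ∑ x : Point n, μ (Dset X t x) * gE n p x ≤ ENNReal.ofReal (1-p) ^ t := by
    intro t
    calc ∑ x : Point n, μ (Dset X t x) * gE n p x
        ≤ ∑ x : Point n, μ (Dset X t x) * 1 :=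
          Finset.sum_le_sum fun x _ => mul_le_mul_right (gE_le_one hn1 hp hp1 x) _
      _ = ∑ x : Point n, μ (Dset X t x) := by simp
      _ ≤ ENNReal.ofReal (1-p) ^ t := Dtotal μ X hn1 hprob hX hstep hinit t
  -- conclude
  apply le_antisymm
  · rw [ENNReal.tsum_eq_iSup_nat]
    apply iSup_le
    intro t
    rw [← hM0 t]
    exact self_le_add_right _ _
  · have htend : Filter.Tendsto
        (fun t : ℕ => (∑' t : ℕ, μ (Bset X (t+1))) + ENNReal.ofReal (1-p) ^ t)
        Filter.atTop (nhds ((∑' t : ℕ, μ (Bset X (t+1))) + 0)) :=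
      Filter.Tendsto.const_add _
        (ENNReal.tendsto_pow_atTop_nhds_zero_of_lt_one (ENNReal.ofReal_lt_one.mpr (by linarith)))
    rw [add_zero] at htend
    apply ge_of_tendsto' htend
    intro t
    calc ENNReal.ofReal (Gr n p n)
        = (∑ m ∈ Finset.range t, μ (Bset X (m+1)))
            + ∑ x : Point n, μ (Dset X t x) * gE n p x := (hM0 t).symm
      _ ≤ (∑' t : ℕ, μ (Bset X (t+1))) + ENNReal.ofReal (1-p) ^ t :=
          add_le_add (ENNReal.sum_le_tsum _) (hR t)

end Meas4
section Anal1

variable {n : ℕ} {p : ℝ}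

lemma Gr_pos (hn : 1 ≤ n) (hp : 0 < p) (hp1 : p < 1) : ∀ k, 0 < Gr n p k := by
  intro k
  induction k with
  | zero => norm_num [Gr]
  | succ k ih =>
    match k, ih with
    | 0, _ =>
      have hd1 : 0 < (n:ℝ) * p + (1 - p) := by
        have := denom_pos hn hp hp1 1 (by norm_num); linarith
      rw [show Gr n p 1 = 1 / ((n : ℝ) * p + (1 - p)) from rfl]
      positivity
    | (j+1), ih =>
      rw [show Gr n p (j+2) = (((j : ℝ)+2)*(1-p))/((n:ℝ)*p + ((j:ℝ)+2)*(1-p)) * Gr n p (j+1)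
        from rfl]
      have hd := denom_pos hn hp hp1 ((j:ℝ)+2) (by positivity)
      have hnum : 0 < ((j : ℝ)+2)*(1-p) := by nlinarith
      exact mul_pos (div_pos hnum hd) ih

lemma Gr_closed (hn : 1 ≤ n) (hp : 0 < p) (hp1 : p < 1) :
    ∀ m, 1 ≤ m → Gr n p m
      = (1-p)⁻¹ * ∏ i ∈ Finset.range m,
          (((i:ℝ)+1)*(1-p))/((n:ℝ)*p + ((i:ℝ)+1)*(1-p)) := by
  intro m hm
  induction m with
  | zero => omega
  | succ m ih =>
    match m, ih with
    | 0, _ =>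
      rw [show Gr n p 1 = 1 / ((n : ℝ) * p + (1 - p)) from rfl]
      have hd1 : 0 < (n:ℝ) * p + (1 - p) := by
        have := denom_pos hn hp hp1 1 (by norm_num); linarith
      rw [Finset.prod_range_one]
      have h1p : (1:ℝ) - p ≠ 0 := by linarith
      norm_num
      field_simp
    | (j+1), ih =>
      rw [show Gr n p (j+2) = (((j : ℝ)+2)*(1-p))/((n:ℝ)*p + ((j:ℝ)+2)*(1-p)) * Gr n p (j+1)
        from rfl]
      rw [ih (by omega), Finset.prod_range_succ
        (fun i => (((i:ℕ):ℝ)+1)*(1-p)/((n:ℝ)*p + (((i:ℕ):ℝ)+1)*(1-p))) (j+1)]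
      push_cast
      ring

lemma Gr_log (hn : 1 ≤ n) (hp : 0 < p) (hp1 : p < 1) :
    Real.log (Gr n p n)
      = -Real.log (1-p)
        - ∑ i ∈ Finset.range n, Real.log (1 + ((n:ℝ)*p/(1-p))/((i:ℝ)+1)) := by
  have h1p : (0:ℝ) < 1 - p := by linarith
  have hfac : ∀ i : ℕ, (((i:ℝ)+1)*(1-p))/((n:ℝ)*p + ((i:ℝ)+1)*(1-p))
      = (1 + ((n:ℝ)*p/(1-p))/((i:ℝ)+1))⁻¹ := by
    intro i
    have hd := denom_pos hn hp hp1 ((i:ℝ)+1) (by positivity)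
    have hi1 : (0:ℝ) < (i:ℝ)+1 := by positivity
    have hrew : (1 + ((n:ℝ)*p/(1-p))/((i:ℝ)+1))
        = ((n:ℝ)*p + ((i:ℝ)+1)*(1-p))/(((i:ℝ)+1)*(1-p)) := by
      field_simp
      ring
    rw [hrew, inv_div]
  rw [Gr_closed hn hp hp1 n hn]
  rw [Real.log_mul (by positivity) ?prodne]
  case prodne =>
    apply Finset.prod_ne_zero_iff.mpr
    intro i _
    have hd := denom_pos hn hp hp1 ((i:ℝ)+1) (by positivity)
    have hnum : (0:ℝ) < ((i:ℝ)+1)*(1-p) := by positivity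
    positivity
  rw [Real.log_inv, Real.log_prod (fun i _ => by
    have hd := denom_pos hn hp hp1 ((i:ℝ)+1) (by positivity)
    have hnum : (0:ℝ) < ((i:ℝ)+1)*(1-p) := by positivity
    positivity)]
  rw [Finset.sum_congr rfl (fun i (_ : i ∈ Finset.range n) => by
    rw [hfac i, Real.log_inv])]
  rw [Finset.sum_neg_distrib]
  ring

end Anal1
section Anal2

lemma log_one_add_le {x : ℝ} (hx : 0 ≤ x) : Real.log (1+x) ≤ x := by
  have := Real.log_le_sub_one_of_pos (show (0:ℝ) < 1+x by linarith)
  linarith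

lemma le_log_one_add {x : ℝ} (hx : 0 ≤ x) : x/(1+x) ≤ Real.log (1+x) := by
  have h1 : (0:ℝ) < 1+x := by linarith
  have h2 := Real.log_le_sub_one_of_pos (inv_pos.mpr h1)
  rw [Real.log_inv] at h2
  have h3 : (1+x)⁻¹ - 1 = -(x/(1+x)) := by field_simp; ring
  rw [h3] at h2
  linarith

lemma log_gap_low (a : ℝ) (ha : 0 < a) : 1/(a+1) ≤ Real.log (a+1) - Real.log a := by
  have h := le_log_one_add (x := 1/a) (by positivity)
  have he : 1 + 1/a = (a+1)/a := by field_simp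
  rw [he, Real.log_div (by positivity) (ne_of_gt ha)] at h
  have he2 : (1/a)/((a+1)/a) = 1/(a+1) := by
    have ha' : a ≠ 0 := ne_of_gt ha
    have ha1 : a + 1 ≠ 0 := by positivity
    field_simp
  rw [he2] at h
  exact h

lemma log_gap_high (a : ℝ) (ha : 0 < a) : Real.log (a+1) - Real.log a ≤ 1/a := by
  have h := log_one_add_le (x := 1/a) (by positivity)
  have he : 1 + 1/a = (a+1)/a := by field_simp
  rw [he, Real.log_div (by positivity) (ne_of_gt ha)] at h
  exact h

lemma sum_inv_le (n : ℕ) (hn : 1 ≤ n) :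
    ∑ i ∈ Finset.range n, 1/((i:ℝ)+1) ≤ 1 + Real.log n := by
  match n, hn with
  | (m+1), _ =>
    rw [Finset.sum_range_succ']
    have hbound : ∑ i ∈ Finset.range m, 1/(((i+1:ℕ):ℝ)+1)
        ≤ Real.log ((m:ℝ)+1) := by
      calc ∑ i ∈ Finset.range m, 1/(((i+1:ℕ):ℝ)+1)
          ≤ ∑ i ∈ Finset.range m,
              (Real.log (((i:ℝ)+1)+1) - Real.log ((i:ℝ)+1)) := by
            apply Finset.sum_le_sum
            intro i _
            have := log_gap_low ((i:ℝ)+1) (by positivity)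
            push_cast
            convert this using 2 <;> push_cast <;> ring
        _ = Real.log ((m:ℝ)+1) := by
            have := Finset.sum_range_sub (fun i => Real.log ((i:ℝ)+1)) m
            simp only [Nat.cast_add, Nat.cast_one] at this ⊢
            rw [this]
            simp
    push_cast
    push_cast at hbound
    simp only [one_div] at hbound ⊢
    norm_num
    linarith

lemma sum_inv_ge (n : ℕ) :
    Real.log ((n:ℝ)+2) - Real.log 2 ≤ ∑ i ∈ Finset.range n, 1/((i:ℝ)+2) := by
  have h1 := Finset.sum_range_sub (fun i : ℕ => Real.log ((i:ℝ)+2)) n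
  calc Real.log ((n:ℝ)+2) - Real.log 2
      = ∑ i ∈ Finset.range n,
          (Real.log (((i+1:ℕ):ℝ)+2) - Real.log ((i:ℝ)+2)) := by
        rw [h1]; norm_num
    _ ≤ ∑ i ∈ Finset.range n, 1/((i:ℝ)+2) := by
        apply Finset.sum_le_sum
        intro i _
        have hcast : ((i+1:ℕ):ℝ)+2 = ((i:ℝ)+2)+1 := by push_cast; ring
        rw [hcast]
        exact log_gap_high ((i:ℝ)+2) (by positivity)

end Anal2
section Anal3

open Filter

lemma div_one_add_div (x y : ℝ) (hy : 0 < y) (hx : 0 ≤ x) :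
    (x/y)/(1+x/y) = x/(y+x) := by
  have hy0 : y ≠ 0 := ne_of_gt hy
  have h2 : (0:ℝ) < y + x := by linarith
  field_simp

lemma tendsto_Gr (c : ℝ) (hc : 0 < c) :
    Filter.Tendsto (fun n : ℕ => Gr n (1 / (c * (n:ℝ) * Real.log n)) n) Filter.atTop
      (nhds (Real.exp (-1/c))) := by
  set p : ℕ → ℝ := fun n => 1 / (c * (n:ℝ) * Real.log n) with hpdef
  have hlog : Tendsto (fun n : ℕ => Real.log n) atTop atTop :=
    Real.tendsto_log_atTop.comp tendsto_natCast_atTop_atTop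
  have hd : Tendsto (fun n : ℕ => c * (n:ℝ) * Real.log n) atTop atTop := by
    have h1 : Tendsto (fun n : ℕ => c * (n:ℝ)) atTop atTop :=
      (tendsto_natCast_atTop_atTop (R := ℝ)).const_mul_atTop hc
    exact h1.atTop_mul_atTop₀ hlog
  have hptend : Tendsto p atTop (nhds 0) := by
    have h := hd.inv_tendsto_atTop
    apply h.congr
    intro n
    simp [hpdef, one_div]
  have hloginv : Tendsto (fun n : ℕ => 1/Real.log n) atTop (nhds 0) := by
    have h := hlog.inv_tendsto_atTop
    apply h.congr
    intro n
    simp [one_div]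
  have h1p : Tendsto (fun n : ℕ => 1 - p n) atTop (nhds 1) := by
    have := (tendsto_const_nhds (x := (1:ℝ)) (f := atTop)).sub hptend
    simpa using this
  have hinv1p : Tendsto (fun n : ℕ => (1 - p n)⁻¹) atTop (nhds 1) := by
    have := h1p.inv₀ one_ne_zero
    simpa using this
  set ε : ℕ → ℝ := fun n => (n:ℝ) * p n / (1 - p n) with hεdef
  have hev : ∀ᶠ n : ℕ in atTop, 2 ≤ n ∧ 1 < c * (n:ℝ) * Real.log n ∧ 0 < Real.log n :=
    (eventually_ge_atTop 2).and ((hd.eventually_gt_atTop 1).and (hlog.eventually_gt_atTop 0))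
  have hgoodp : ∀ n : ℕ, 1 < c * (n:ℝ) * Real.log n → 0 < p n ∧ p n < 1 := by
    intro n hgt
    constructor
    · exact div_pos one_pos (by linarith)
    · rw [hpdef]
      simp only
      rw [div_lt_one (by linarith)]
      exact hgt
  have hnpEv : ∀ᶠ n : ℕ in atTop, (n:ℝ) * p n = (c * Real.log n)⁻¹ := by
    filter_upwards [hev] with n ⟨h2, hgt, hlogpos⟩
    have hn0 : (n:ℝ) ≠ 0 := by positivity
    have hl0 : Real.log n ≠ 0 := ne_of_gt hlogpos
    have hc0 : c ≠ 0 := ne_of_gt hc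
    rw [hpdef]
    field_simp
  have hclog : Tendsto (fun n : ℕ => c * Real.log n) atTop atTop :=
    hlog.const_mul_atTop hc
  have hclidydy : Tendsto (fun n : ℕ => (c * Real.log n)⁻¹) atTop (nhds 0) := by
    have h := hclog.inv_tendsto_atTop
    apply h.congr
    intro n
    simp
  have hnp0 : Tendsto (fun n : ℕ => (n:ℝ) * p n) atTop (nhds 0) :=
    Tendsto.congr' (hnpEv.mono fun n h => h.symm) hclidydy
  have hεtend : Tendsto ε atTop (nhds 0) := by
    have := hnp0.div h1p one_ne_zero
    rw [zero_div] at this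
    exact this
  have hεev : ∀ᶠ n : ℕ in atTop, 0 ≤ ε n ∧ ε n ≤ 1 := by
    filter_upwards [hev, hεtend.eventually_lt_const (show (0:ℝ) < 1 by norm_num)]
      with n ⟨h2, hgt, hlogpos⟩ hlt
    obtain ⟨hp0, hp1⟩ := hgoodp n hgt
    refine ⟨?_, hlt.le⟩
    simp only [hεdef]
    exact div_nonneg (by positivity) (by linarith)
  set S : ℕ → ℝ := fun n => ∑ i ∈ Finset.range n, Real.log (1 + ε n/((i:ℝ)+1)) with hSdef
  -- upper bound
  have hSle : ∀ᶠ n : ℕ in atTop, S n ≤ ε n * (1 + Real.log n) := by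
    filter_upwards [hev, hεev] with n ⟨h2, hgt, hlogpos⟩ ⟨hε0, hε1⟩
    calc S n ≤ ∑ i ∈ Finset.range n, ε n * (1/((i:ℝ)+1)) := by
          apply Finset.sum_le_sum
          intro i _
          have hx : (0:ℝ) ≤ ε n / ((i:ℝ)+1) := by positivity
          calc Real.log (1 + ε n/((i:ℝ)+1)) ≤ ε n/((i:ℝ)+1) := log_one_add_le hx
            _ = ε n * (1/((i:ℝ)+1)) := by ring
      _ = ε n * ∑ i ∈ Finset.range n, 1/((i:ℝ)+1) := by rw [Finset.mul_sum]
      _ ≤ ε n * (1 + Real.log n) :=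
          mul_le_mul_of_nonneg_left (sum_inv_le n (by omega)) hε0
  -- lower bound
  have hSge : ∀ᶠ n : ℕ in atTop, ε n * (Real.log n - Real.log 2) ≤ S n := by
    filter_upwards [hev, hεev] with n ⟨h2, hgt, hlogpos⟩ ⟨hε0, hε1⟩
    calc ε n * (Real.log n - Real.log 2)
        ≤ ε n * (Real.log ((n:ℝ)+2) - Real.log 2) := by
          apply mul_le_mul_of_nonneg_left _ hε0
          have : Real.log (n:ℝ) ≤ Real.log ((n:ℝ)+2) :=
            Real.log_le_log (by positivity) (by linarith)
          linarith
      _ ≤ ε n * ∑ i ∈ Finset.range n, 1/((i:ℝ)+2) :=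
          mul_le_mul_of_nonneg_left (sum_inv_ge n) hε0
      _ = ∑ i ∈ Finset.range n, ε n/((i:ℝ)+2) := by
          rw [Finset.mul_sum]
          exact Finset.sum_congr rfl fun i _ => by ring
      _ ≤ S n := by
          apply Finset.sum_le_sum
          intro i _
          have hi1 : (0:ℝ) < (i:ℝ)+1 := by positivity
          have hx : (0:ℝ) ≤ ε n / ((i:ℝ)+1) := by positivity
          have hlb := le_log_one_add hx
          rw [div_one_add_div (ε n) ((i:ℝ)+1) hi1 hε0] at hlb
          refine le_trans ?_ hlb
          exact div_le_div_of_nonneg_left hε0 (by linarith) (by linarith)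
  -- limits of the bounds
  have hU : Tendsto (fun n : ℕ => ε n * (1 + Real.log n)) atTop (nhds (1/c)) := by
    have hbase : Tendsto (fun n : ℕ => (1/c) * (1/Real.log n + 1) * (1 - p n)⁻¹) atTop
        (nhds ((1/c) * (0 + 1) * 1)) :=
      (tendsto_const_nhds.mul (hloginv.add tendsto_const_nhds)).mul hinv1p
    rw [show (1/c) * ((0:ℝ) + 1) * 1 = 1/c by ring] at hbase
    apply Tendsto.congr' _ hbase
    filter_upwards [hev, hnpEv] with n ⟨h2, hgt, hlogpos⟩ hnp
    have hl0 : Real.log n ≠ 0 := ne_of_gt hlogpos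
    have hc0 : c ≠ 0 := ne_of_gt hc
    have hkey : (1/c) * (1/Real.log n + 1) = (c*Real.log n)⁻¹ * (1 + Real.log n) := by
      field_simp
      try ring
    simp only [hεdef]
    rw [hkey, hnp]
    ring
  have hL : Tendsto (fun n : ℕ => ε n * (Real.log n - Real.log 2)) atTop (nhds (1/c)) := by
    have hl2 : Tendsto (fun n : ℕ => Real.log 2 / Real.log n) atTop (nhds 0) := by
      have := tendsto_const_nhds (x := Real.log 2) (f := (atTop : Filter ℕ)) |>.mul hloginv
      simp only [mul_zero] at this
      apply this.congr
      intro n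
      rw [one_div, div_eq_mul_inv]
    have hbase : Tendsto (fun n : ℕ => (1/c) * (1 - Real.log 2/Real.log n) * (1 - p n)⁻¹)
        atTop (nhds ((1/c) * (1 - 0) * 1)) :=
      (tendsto_const_nhds.mul (tendsto_const_nhds.sub hl2)).mul hinv1p
    rw [show (1/c) * ((1:ℝ) - 0) * 1 = 1/c by ring] at hbase
    apply Tendsto.congr' _ hbase
    filter_upwards [hev, hnpEv] with n ⟨h2, hgt, hlogpos⟩ hnp
    have hl0 : Real.log n ≠ 0 := ne_of_gt hlogpos
    have hc0 : c ≠ 0 := ne_of_gt hc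
    have hkey : (1/c) * (1 - Real.log 2/Real.log n)
        = (c*Real.log n)⁻¹ * (Real.log n - Real.log 2) := by
      field_simp
      try ring
    simp only [hεdef]
    rw [hkey, hnp]
    ring
  have hS : Tendsto S atTop (nhds (1/c)) :=
    tendsto_of_tendsto_of_tendsto_of_le_of_le' hL hU hSge hSle
  -- the log of Gr
  have hlogGr : Tendsto (fun n : ℕ => Real.log (Gr n (p n) n)) atTop (nhds (0 - 1/c)) := by
    have hneglog : Tendsto (fun n : ℕ => -Real.log (1 - p n)) atTop (nhds 0) := by
      have hcont := (Real.continuousAt_log one_ne_zero).tendsto.comp h1p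
      rw [Real.log_one] at hcont
      simpa using hcont.neg
    have htotal : Tendsto (fun n : ℕ => -Real.log (1 - p n) - S n) atTop (nhds (0 - 1/c)) :=
      hneglog.sub hS
    apply Tendsto.congr' _ htotal
    filter_upwards [hev] with n ⟨h2, hgt, hlogpos⟩
    obtain ⟨hp0, hp1⟩ := hgoodp n hgt
    rw [Gr_log (by omega) hp0 hp1]
  -- conclude
  have hfin := (Real.continuous_exp.tendsto _).comp hlogGr
  rw [show (0:ℝ) - 1/c = -1/c by ring] at hfin
  apply Tendsto.congr' _ hfin
  filter_upwards [hev] with n ⟨h2, hgt, hlogpos⟩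
  obtain ⟨hp0, hp1⟩ := hgoodp n hgt
  simp only [Function.comp]
  rw [Real.exp_log (Gr_pos (by omega : 1 ≤ n) hp0 hp1 n)]

end Anal3
/-- With `p = 1/(c·n·log n)`, the probability of optimizing OneMax in a single OI phase,
starting from the all-zero string, converges to `e^{-1/c}` (Lemma 2 of the paper). -/
theorem onemax_one_phase_limit (c : ℝ) (hc : 0 < c)
    (Ω : ℕ → Type) [inst : ∀ n, MeasurableSpace (Ω n)]
    (μ : ∀ n, Measure (Ω n)) (X : ∀ n, ℕ → Ω n → Point n × Op)
    (q : ℕ → ℝ) (P : ℕ → ℝ)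
    (h : ∀ n : ℕ, 2 ≤ n → 1 < c * (n : ℝ) * Real.log n →
      0 < q n ∧ q n < 1 ∧
      IsProbabilityMeasure (μ n) ∧
      IsMMAHH (μ n) (X n) (OneMax n) (1 / (c * (n : ℝ) * Real.log n)) (q n) ∧
      (μ n) {ω | X n 0 ω = (fun _ => false, Op.OI)} = 1 ∧
      P n = ((μ n) {ω | n - ones ((X n) (switchTime (X n) 1 ω) ω).1 = 0}).toReal) :
    Filter.Tendsto P Filter.atTop (nhds (Real.exp (-1 / c))) := by
  have hlog : Filter.Tendsto (fun n : ℕ => Real.log n) Filter.atTop Filter.atTop :=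
    Real.tendsto_log_atTop.comp tendsto_natCast_atTop_atTop
  have hd : Filter.Tendsto (fun n : ℕ => c * (n:ℝ) * Real.log n) Filter.atTop Filter.atTop := by
    have h1 : Filter.Tendsto (fun n : ℕ => c * (n:ℝ)) Filter.atTop Filter.atTop :=
      (tendsto_natCast_atTop_atTop (R := ℝ)).const_mul_atTop hc
    exact h1.atTop_mul_atTop₀ hlog
  have hev : ∀ᶠ n : ℕ in Filter.atTop, 2 ≤ n ∧ 1 < c * (n:ℝ) * Real.log n :=
    (Filter.eventually_ge_atTop 2).and (hd.eventually_gt_atTop 1)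
  apply Filter.Tendsto.congr' _ (tendsto_Gr c hc)
  filter_upwards [hev] with n ⟨h2, hgt⟩
  obtain ⟨hq0, hq1, hprob, hM, hinit, hPn⟩ := h n h2 hgt
  have hp0 : 0 < 1 / (c * (n:ℝ) * Real.log n) := div_pos one_pos (by linarith)
  have hp1 : 1 / (c * (n:ℝ) * Real.log n) < 1 := (div_lt_one (by linarith)).mpr hgt
  have hms := measure_success (μ n) (X n) h2 hp0 hp1 hprob hM hinit
  rw [hPn, hms, ENNReal.toReal_ofReal (Gr_nonneg (by omega) hp0 hp1 n)]
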